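/- (Asymptotic consistency, Eq. (7).) In the setting of Theorem 3.1, suppose the deterministic sequences satisfy P{ d_W(P*, P̂_N) > r_N } ≤ β_N for every N, ∑_{N=1}^∞ β_N < ∞, and r_N → 0 as N → ∞, and that k̂_N ≤ L almost surely for every N. Then almost surely, for every δ > 0 there exists N₀ such that for all N ≥ N₀: τ_ε/(1+ε) − δ ≤ E_{P*}[h(x̂_N,ξ)] ≤ τ_ε + δ, where τ_ε = (1+ε)·inf_{x∈𝒳} E_{P̂_N}[h(x,ξ)] is the (random, N-dependent) reference value. -/

import Mathlib

open MeasureTheory Pointwise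

noncomputable section

abbrev Vec (m : ℕ) := EuclideanSpace ℝ (Fin m)

/-- A coupling of two Borel probability measures on `Vec m`. -/
def IsCoupling {m : ℕ} (γ : Measure (Vec m × Vec m)) (P Q : Measure (Vec m)) : Prop :=
  IsProbabilityMeasure γ ∧ γ.map Prod.fst = P ∧ γ.map Prod.snd = Q

/-- Type-1 Wasserstein distance: infimum of `∫ ‖ξ₁ - ξ₂‖₂ dγ` over couplings `γ`. -/
noncomputable def wDist {m : ℕ} (P Q : Measure (Vec m)) : ℝ :=
  sInf {c : ℝ | ∃ γ : Measure (Vec m × Vec m), IsCoupling γ P Q ∧ c = ∫ p, ‖p.1 - p.2‖ ∂γ}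

/-- `(x, k)` is RS-feasible for reference value `τ` with respect to `Phat`. -/
def RSFeasible {m : ℕ} {X : Type*} (h : X → Vec m → ℝ)
    (Phat : Measure (Vec m)) (τ : ℝ) (x : X) (k : ℝ) : Prop :=
  0 ≤ k ∧ ∀ P : Measure (Vec m), IsProbabilityMeasure P →
    Integrable (fun ξ => ‖ξ‖) P → (∫ ξ, h x ξ ∂P) - τ ≤ k * wDist P Phat

/-- Empirical measure `(1/N) ∑ δ_{x i}`. -/
noncomputable def empMeas {m N : ℕ} (xs : Fin N → Vec m) : Measure (Vec m) :=
  (N : ENNReal)⁻¹ • ∑ i : Fin N, Measure.dirac (xs i)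

-- integrability w.r.t. empirical measure
lemma empMeas_integrable {m N : ℕ} (xs : Fin N → Vec m) (g : Vec m → ℝ)
    (hg : Measurable g) : Integrable g (empMeas xs) := by
  rcases Nat.eq_zero_or_pos N with hN | hN
  · subst hN; simp [empMeas]
  rw [empMeas]
  refine Integrable.smul_measure ?_ (by simp [hN.ne'])
  rw [integrable_finset_sum_measure]
  intro i _
  refine ⟨hg.aestronglyMeasurable, ?_⟩
  rw [HasFiniteIntegral]
  rw [lintegral_dirac' _ (by measurability)]
  exact ENNReal.coe_lt_top

theorem empMeas_prob {m N : ℕ} (hN : N ≠ 0) (xs : Fin N → Vec m) :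
    IsProbabilityMeasure (empMeas xs) := by
  constructor
  rw [empMeas]
  simp [Measure.smul_apply, ENNReal.inv_mul_cancel, hN]

lemma wDist_nonneg {m : ℕ} (P Q : Measure (Vec m)) : 0 ≤ wDist P Q := by
  apply Real.sInf_nonneg
  rintro c ⟨γ, _, rfl⟩
  exact integral_nonneg fun p => norm_nonneg _

lemma abs_integral_sub_le_wDist {m : ℕ} (f : Vec m → ℝ) (L : ℝ) (hL : 0 ≤ L)
    (hf : ∀ ξ η, |f ξ - f η| ≤ L * ‖ξ - η‖)
    (P Q : Measure (Vec m)) [IsProbabilityMeasure P] [IsProbabilityMeasure Q]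
    (hP : Integrable (fun ξ => ‖ξ‖) P) (hQ : Integrable (fun ξ => ‖ξ‖) Q)
    (hfP : Integrable f P) (hfQ : Integrable f Q) :
    |(∫ ξ, f ξ ∂P) - ∫ ξ, f ξ ∂Q| ≤ L * wDist P Q := by
  have hfc : Continuous f := by
    have : LipschitzWith ⟨L, hL⟩ f := by
      apply LipschitzWith.of_dist_le_mul
      intro ξ η
      rw [Real.dist_eq, dist_eq_norm]; exact hf ξ η
    exact this.continuous
  set S := {c : ℝ | ∃ γ : Measure (Vec m × Vec m), IsCoupling γ P Q ∧ c = ∫ p, ‖p.1 - p.2‖ ∂γ}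
  have hSne : S.Nonempty := by
    refine ⟨_, P.prod Q, ⟨inferInstance, ?_, ?_⟩, rfl⟩
    · simp
    · simp
  have key : ∀ c ∈ S, |(∫ ξ, f ξ ∂P) - ∫ ξ, f ξ ∂Q| ≤ L * c := by
    rintro c ⟨γ, ⟨hγp, hfst, hsnd⟩, rfl⟩
    have hγfin : IsProbabilityMeasure γ := hγp
    have h1 : Integrable (fun p : Vec m × Vec m => f p.1) γ := by
      rw [← Function.comp_def]
      apply (integrable_map_measure hfc.measurable.stronglyMeasurable.aestronglyMeasurable
        measurable_fst.aemeasurable).mp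
      rw [hfst]; exact hfP
    have h2 : Integrable (fun p : Vec m × Vec m => f p.2) γ := by
      rw [← Function.comp_def]
      apply (integrable_map_measure hfc.measurable.stronglyMeasurable.aestronglyMeasurable
        measurable_snd.aemeasurable).mp
      rw [hsnd]; exact hfQ
    have hn1 : Integrable (fun p : Vec m × Vec m => ‖p.1‖) γ := by
      rw [← Function.comp_def]
      apply (integrable_map_measure (continuous_norm.measurable.stronglyMeasurable.aestronglyMeasurable)
        measurable_fst.aemeasurable).mp
      rw [hfst]; exact hP
    have hn2 : Integrable (fun p : Vec m × Vec m => ‖p.2‖) γ := by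
      rw [← Function.comp_def]
      apply (integrable_map_measure (continuous_norm.measurable.stronglyMeasurable.aestronglyMeasurable)
        measurable_snd.aemeasurable).mp
      rw [hsnd]; exact hQ
    have hnd : Integrable (fun p : Vec m × Vec m => ‖p.1 - p.2‖) γ := by
      refine Integrable.mono' (hn1.add hn2)
        ((continuous_fst.sub continuous_snd).norm.measurable.stronglyMeasurable.aestronglyMeasurable)
        (Filter.Eventually.of_forall fun p => ?_)
      simp only [norm_norm]
      exact norm_sub_le _ _
    have e1 : ∫ ξ, f ξ ∂P = ∫ p, f p.1 ∂γ := by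
      rw [← hfst, integral_map measurable_fst.aemeasurable
        hfc.measurable.stronglyMeasurable.aestronglyMeasurable]
    have e2 : ∫ ξ, f ξ ∂Q = ∫ p, f p.2 ∂γ := by
      rw [← hsnd, integral_map measurable_snd.aemeasurable
        hfc.measurable.stronglyMeasurable.aestronglyMeasurable]
    rw [e1, e2, ← integral_sub h1 h2]
    calc |∫ p, (f p.1 - f p.2) ∂γ| ≤ ∫ p, |f p.1 - f p.2| ∂γ := by
          simpa [Real.norm_eq_abs] using
            norm_integral_le_integral_norm (fun p : Vec m × Vec m => f p.1 - f p.2) (μ := γ)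
      _ ≤ ∫ p, L * ‖p.1 - p.2‖ ∂γ := by
          apply integral_mono (h1.sub h2).abs (hnd.const_mul L)
          intro p; exact hf p.1 p.2
      _ = L * ∫ p, ‖p.1 - p.2‖ ∂γ := integral_const_mul L _
  rw [wDist]
  have : L * sInf S = sInf (L • S) := (Real.sInf_smul_of_nonneg hL S).symm
  rw [show L * sInf S = L • sInf S from rfl, ← Real.sInf_smul_of_nonneg hL S]
  apply le_csInf (hSne.smul_set)
  rintro b ⟨c, hc, rfl⟩
  exact key c hc


/-- Asymptotic consistency, Eq. (7): if the tail bounds hold with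
summable beta_N, r_N -> 0, and khat_N <= L a.s., then almost surely, for every
delta > 0, eventually tau/(1+eps) - delta <= E_{P*}[h(xhat_N,.)] <= tau + delta. -/
theorem asymptotic_consistency {m : ℕ}
    {X : Type*} [Nonempty X]
    {Ω : Type*} [MeasurableSpace Ω] (μ : Measure Ω) [IsProbabilityMeasure μ]
    (h : X → Vec m → ℝ) (L : ℝ) (hL : 0 ≤ L)
    (hLip : ∀ x ξ η, |h x ξ - h x η| ≤ L * ‖ξ - η‖)
    (hInt : ∀ x (P : Measure (Vec m)), IsProbabilityMeasure P →
      Integrable (fun ξ => ‖ξ‖) P → Integrable (h x) P)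
    (Pstar : Measure (Vec m)) [IsProbabilityMeasure Pstar]
    (hPstarmom : Integrable (fun ξ => ‖ξ‖) Pstar)
    -- i.i.d. samples from Pstar
    (ξs : ℕ → Ω → Vec m) (hmeas : ∀ i, Measurable (ξs i))
    (hindep : ProbabilityTheory.iIndepFun ξs μ)
    (hdist : ∀ i, μ.map (ξs i) = Pstar)
    -- empirical measures
    (Phat : (N : ℕ) → Ω → Measure (Vec m))
    (hPhat : ∀ N ω, Phat N ω = empMeas (fun i : Fin N => ξs i ω))
    -- reference values
    (ε : ℝ) (hε : 0 < ε)
    (τ : (N : ℕ) → Ω → ℝ)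
    (hτ : ∀ N ω, τ N ω = (1 + ε) * ⨅ x, ∫ ξ, h x ξ ∂(Phat N ω))
    (hfin : ∀ N, ∀ᵐ ω ∂μ, BddBelow (Set.range fun x => ∫ ξ, h x ξ ∂(Phat N ω)))
    -- almost surely RS-feasible random pairs with fragility bounded by L
    (xhat : (N : ℕ) → Ω → X) (khat : (N : ℕ) → Ω → ℝ)
    (hfeas : ∀ N, ∀ᵐ ω ∂μ, RSFeasible h (Phat N ω) (τ N ω) (xhat N ω) (khat N ω))
    (hkL : ∀ N, ∀ᵐ ω ∂μ, khat N ω ≤ L)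
    -- concentration: summable confidence levels and vanishing radii
    (r β : ℕ → ℝ) (hr : ∀ N, 0 < r N) (hβ0 : ∀ N, 0 < β N) (hβ1 : ∀ N, β N < 1)
    (htail : ∀ N, μ {ω | r N < wDist Pstar (Phat N ω)} ≤ ENNReal.ofReal (β N))
    (hsum : Summable β)
    (hr0 : Filter.Tendsto r Filter.atTop (nhds 0)) :
    ∀ᵐ ω ∂μ, ∀ δ : ℝ, 0 < δ → ∃ N₀ : ℕ, ∀ N ≥ N₀,
      τ N ω / (1 + ε) - δ ≤ (∫ ξ, h (xhat N ω) ξ ∂Pstar) ∧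
      (∫ ξ, h (xhat N ω) ξ ∂Pstar) ≤ τ N ω + δ := by
  classical
  -- Borel–Cantelli
  have hβnn : ∀ N, 0 ≤ β N := fun N => (hβ0 N).le
  have hsumE : (∑' N, μ {ω | r N < wDist Pstar (Phat N ω)}) ≠ ⊤ := by
    refine ne_of_lt (lt_of_le_of_lt (ENNReal.tsum_le_tsum fun N => htail N) ?_)
    rw [← ENNReal.ofReal_tsum_of_nonneg hβnn hsum]
    exact ENNReal.ofReal_lt_top
  have hBC := ae_eventually_notMem (μ := μ)
    (s := fun N => {ω | r N < wDist Pstar (Phat N ω)}) hsumE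
  filter_upwards [hBC, (ae_all_iff).mpr hfeas, (ae_all_iff).mpr hkL, (ae_all_iff).mpr hfin]
    with ω hω hfe hk hbd
  intro δ hδ
  have hL1 : (0:ℝ) < L + 1 := by linarith
  have h2' : ∀ᶠ N in Filter.atTop, r N < δ / (L + 1) :=
    hr0.eventually_lt_const (by positivity)
  obtain ⟨N₁, h1⟩ := Filter.eventually_atTop.mp hω
  obtain ⟨N₂, h2⟩ := Filter.eventually_atTop.mp h2'
  refine ⟨max (max N₁ N₂) 1, fun N hN => ?_⟩
  have hN1 : N₁ ≤ N := le_trans (le_trans (le_max_left _ _) (le_max_left _ _)) hN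
  have hN2 : N₂ ≤ N := le_trans (le_trans (le_max_right _ _) (le_max_left _ _)) hN
  have hNpos : N ≠ 0 := by
    have : 1 ≤ N := le_trans (le_max_right _ _) hN
    omega
  set w := wDist Pstar (Phat N ω) with hwdef
  have hw : w ≤ r N := not_lt.mp (h1 N hN1)
  have hwn : 0 ≤ w := wDist_nonneg _ _
  have hLr : L * r N ≤ δ := by
    have hr2 : r N ≤ δ / (L + 1) := (h2 N hN2).le
    have : L * r N ≤ L * (δ / (L + 1)) := mul_le_mul_of_nonneg_left hr2 hL
    refine this.trans ?_
    rw [mul_div_assoc', div_le_iff₀ hL1]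
    nlinarith
  haveI hPprob : IsProbabilityMeasure (Phat N ω) := by
    rw [hPhat]; exact empMeas_prob hNpos _
  have hPint : Integrable (fun ξ => ‖ξ‖) (Phat N ω) := by
    rw [hPhat]; exact empMeas_integrable _ _ measurable_norm
  set f := h (xhat N ω) with hfdef
  have hfP : Integrable f Pstar := hInt _ Pstar inferInstance hPstarmom
  have hfQ : Integrable f (Phat N ω) := hInt _ _ hPprob hPint
  obtain ⟨hk0, hfeas2⟩ := hfe N
  -- upper bound
  have hup : (∫ ξ, f ξ ∂Pstar) - τ N ω ≤ khat N ω * w := hfeas2 Pstar inferInstance hPstarmom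
  have hkw : khat N ω * w ≤ L * w := mul_le_mul_of_nonneg_right (hk N) hwn
  have hLw : L * w ≤ L * r N := mul_le_mul_of_nonneg_left hw hL
  constructor
  swap
  · linarith
  -- lower bound
  have habs := abs_integral_sub_le_wDist f L hL (hLip (xhat N ω)) Pstar (Phat N ω)
    hPstarmom hPint hfP hfQ
  rw [← hwdef] at habs
  obtain ⟨hab1, hab2⟩ := abs_le.mp habs
  have hinf : (⨅ x, ∫ ξ, h x ξ ∂(Phat N ω)) ≤ ∫ ξ, f ξ ∂(Phat N ω) := ciInf_le (hbd N) (xhat N ω)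
  have hτeq : τ N ω / (1 + ε) = ⨅ x, ∫ ξ, h x ξ ∂(Phat N ω) := by
    rw [hτ, mul_div_cancel_left₀ _ (by linarith : (1:ℝ) + ε ≠ 0)]
  rw [hτeq]
  linarith
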